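/- For all n ≥ 1, there is a bijection between the set of permutations of [n] avoiding 132, 213, and 2341 and the set of tilings of a 1×(n+1) rectangle with tiles of sizes 1×1 and 1×2 that use at least one 1×2 tile. -/

import Mathlib

/-- A permutation `π` of `Fin n` avoids the pattern given (in one-line notation) by the
list `s` when there is no increasing choice of positions along which the values of `π`
have the same pairwise comparisons as the entries of `s`. -/
def AvoidsPat {n : ℕ} (π : Equiv.Perm (Fin n)) (s : List ℕ) : Prop :=
  ¬ ∃ f : Fin s.length ↪o Fin n,
      ∀ i j : Fin s.length, s.get i < s.get j ↔ π (f i) < π (f j)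

/-- The number of permutations of `Fin n` avoiding every pattern in `R`. -/
noncomputable def AvoidCount (R : List (List ℕ)) (n : ℕ) : ℕ :=
  Nat.card {π : Equiv.Perm (Fin n) // ∀ s ∈ R, AvoidsPat π s}

/-- The `k`-generalized Fibonacci numbers: `F_{k,n} = 0` for `n ≤ 0`, `F_{k,1} = 1`,
`F_{k,n} = ∑_{i=1}^{k} F_{k,n-i}` for `n ≥ 2` (terms with nonpositive index are `0`). -/
def genFib (k : ℕ) : ℕ → ℕ
  | 0 => 0
  | 1 => 1
  | n + 2 => ∑ i ∈ Finset.range k, genFib k (n + 1 - i)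

/-! ### Auxiliary definitions -/

abbrev Avoids {n : ℕ} (π : Equiv.Perm (Fin n)) : Prop :=
  AvoidsPat π [1, 3, 2] ∧ AvoidsPat π [2, 1, 3] ∧ AvoidsPat π [2, 3, 4, 1]

abbrev AvT (n : ℕ) :=
  {π : Equiv.Perm (Fin n) //
    AvoidsPat π [1, 3, 2] ∧ AvoidsPat π [2, 1, 3] ∧ AvoidsPat π [2, 3, 4, 1]}

abbrev TilT (m : ℕ) := {l : List ℕ // l.sum = m ∧ (∀ x ∈ l, x = 1 ∨ x = 2) ∧ 2 ∈ l}

abbrev CompT (m : ℕ) := {l : List ℕ // l.sum = m ∧ ∀ x ∈ l, x = 1 ∨ x = 2}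

/-! ### Generic facts about avoidance -/

lemma avoidsPat_of_short {n : ℕ} (π : Equiv.Perm (Fin n)) (s : List ℕ)
    (h : n < s.length) : AvoidsPat π s := by
  rintro ⟨f, -⟩
  have := Fintype.card_le_of_embedding f.toEmbedding
  simp only [Fintype.card_fin] at this
  omega

lemma avoids_of_le_two {n : ℕ} (hn : n ≤ 2) (π : Equiv.Perm (Fin n)) : Avoids π :=
  ⟨avoidsPat_of_short π _ (by simp; omega), avoidsPat_of_short π _ (by simp; omega),
    avoidsPat_of_short π _ (by simp; omega)⟩

lemma one_avoids (n : ℕ) : Avoids (1 : Equiv.Perm (Fin n)) := by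
  refine ⟨?_, ?_, ?_⟩
  · rintro ⟨f, hf⟩
    have h := (hf ⟨1, by norm_num⟩ ⟨2, by norm_num⟩).mpr
      (f.strictMono (show (⟨1, by norm_num⟩ : Fin 3) < ⟨2, by norm_num⟩ by decide))
    exact absurd h (by decide)
  · rintro ⟨f, hf⟩
    have h := (hf ⟨0, by norm_num⟩ ⟨1, by norm_num⟩).mpr
      (f.strictMono (show (⟨0, by norm_num⟩ : Fin 3) < ⟨1, by norm_num⟩ by decide))
    exact absurd h (by decide)
  · rintro ⟨f, hf⟩
    have h := (hf ⟨0, by norm_num⟩ ⟨3, by norm_num⟩).mpr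
      (f.strictMono (show (⟨0, by norm_num⟩ : Fin 4) < ⟨3, by norm_num⟩ by decide))
    exact absurd h (by decide)

/-! ### Occurrence builders -/

lemma not_avoid_132 {N : ℕ} (π : Equiv.Perm (Fin N)) {a b c : Fin N}
    (hab : a < b) (hbc : b < c) (h1 : π a < π c) (h2 : π c < π b) :
    ¬ AvoidsPat π [1, 3, 2] := by
  intro hA
  refine hA ⟨OrderEmbedding.ofStrictMono ![a, b, c] ?_, ?_⟩
  · intro i j hij
    fin_cases i <;> fin_cases j <;>
      first
        | exact absurd hij (by decide)
        | exact hab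
        | exact hbc
        | exact hab.trans hbc
  · intro i j
    fin_cases i <;> fin_cases j <;>
      first
        | exact iff_of_false (by decide) (lt_irrefl _)
        | exact iff_of_true (by decide) h1
        | exact iff_of_true (by decide) h2
        | exact iff_of_true (by decide) (h1.trans h2)
        | exact iff_of_false (by decide) (lt_asymm h1)
        | exact iff_of_false (by decide) (lt_asymm h2)
        | exact iff_of_false (by decide) (lt_asymm (h1.trans h2))

lemma not_avoid_213 {N : ℕ} (π : Equiv.Perm (Fin N)) {a b c : Fin N}
    (hab : a < b) (hbc : b < c) (h1 : π b < π a) (h2 : π a < π c) :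
    ¬ AvoidsPat π [2, 1, 3] := by
  intro hA
  refine hA ⟨OrderEmbedding.ofStrictMono ![a, b, c] ?_, ?_⟩
  · intro i j hij
    fin_cases i <;> fin_cases j <;>
      first
        | exact absurd hij (by decide)
        | exact hab
        | exact hbc
        | exact hab.trans hbc
  · intro i j
    fin_cases i <;> fin_cases j <;>
      first
        | exact iff_of_false (by decide) (lt_irrefl _)
        | exact iff_of_true (by decide) h1
        | exact iff_of_true (by decide) h2
        | exact iff_of_true (by decide) (h1.trans h2)
        | exact iff_of_true (by decide) (h2.trans' h1)
        | exact iff_of_false (by decide) (lt_asymm h1)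
        | exact iff_of_false (by decide) (lt_asymm h2)
        | exact iff_of_false (by decide) (lt_asymm (h1.trans h2))
        | exact iff_of_false (by decide) (lt_asymm (h2.trans' h1))

lemma not_avoid_2341 {N : ℕ} (π : Equiv.Perm (Fin N)) {a b c d : Fin N}
    (hab : a < b) (hbc : b < c) (hcd : c < d)
    (h1 : π d < π a) (h2 : π a < π b) (h3 : π b < π c) :
    ¬ AvoidsPat π [2, 3, 4, 1] := by
  intro hA
  refine hA ⟨OrderEmbedding.ofStrictMono ![a, b, c, d] ?_, ?_⟩
  · intro i j hij
    fin_cases i <;> fin_cases j <;>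
      first
        | exact absurd hij (by decide)
        | exact hab
        | exact hbc
        | exact hcd
        | exact hab.trans hbc
        | exact hbc.trans hcd
        | exact hab.trans (hbc.trans hcd)
  · intro i j
    fin_cases i <;> fin_cases j <;>
      first
        | exact iff_of_false (by decide) (lt_irrefl _)
        | exact iff_of_true (by decide) h1
        | exact iff_of_true (by decide) h2
        | exact iff_of_true (by decide) h3
        | exact iff_of_true (by decide) (h2.trans h3)
        | exact iff_of_true (by decide) (h1.trans h2)
        | exact iff_of_true (by decide) (h1.trans (h2.trans h3))
        | exact iff_of_false (by decide) (lt_asymm h1)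
        | exact iff_of_false (by decide) (lt_asymm h2)
        | exact iff_of_false (by decide) (lt_asymm h3)
        | exact iff_of_false (by decide) (lt_asymm (h2.trans h3))
        | exact iff_of_false (by decide) (lt_asymm (h1.trans h2))
        | exact iff_of_false (by decide) (lt_asymm (h1.trans (h2.trans h3)))

/-! ### Transfer of avoidance across removal of initial maxima -/

section Transfer

variable {n k : ℕ} (π : Equiv.Perm (Fin (n + k))) (π' : Equiv.Perm (Fin n))

lemma shrink_occ
    (hval : ∀ i : Fin n, (π ⟨k + (i : ℕ), by have := i.isLt; omega⟩ : ℕ) = (π' i : ℕ))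
    {s : List ℕ} (f : Fin s.length ↪o Fin (n + k))
    (hf : ∀ i j : Fin s.length, s.get i < s.get j ↔ π (f i) < π (f j))
    (hge : ∀ i, k ≤ (f i : ℕ)) :
    ∃ f' : Fin s.length ↪o Fin n,
      ∀ i j : Fin s.length, s.get i < s.get j ↔ π' (f' i) < π' (f' j) := by
  refine ⟨OrderEmbedding.ofStrictMono
    (fun i => (⟨(f i : ℕ) - k, by have := (f i).isLt; have := hge i; omega⟩ : Fin n)) ?_, ?_⟩
  · intro i j hij
    have h1 := f.strictMono hij
    have h2 := hge i
    rw [Fin.lt_def] at h1 ⊢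
    simp only []
    omega
  · intro i j
    rw [hf i j]
    show _ ↔ π' ⟨(f i : ℕ) - k, _⟩ < π' ⟨(f j : ℕ) - k, _⟩
    rw [Fin.lt_def, Fin.lt_def]
    have hvv : ∀ i, (π' ⟨(f i : ℕ) - k, by have := (f i).isLt; have := hge i; omega⟩ : ℕ)
        = (π (f i) : ℕ) := by
      intro i
      rw [← hval ⟨(f i : ℕ) - k, by have := (f i).isLt; have := hge i; omega⟩]
      congr 2
      apply Fin.ext
      simp only []
      have := hge i
      omega
    rw [hvv i, hvv j]

lemma avoids_transfer (hk : k ≤ 2)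
    (hfront : ∀ j : Fin (n + k), (j : ℕ) < k → (π j : ℕ) = n + (j : ℕ))
    (hval : ∀ i : Fin n, (π ⟨k + (i : ℕ), by have := i.isLt; omega⟩ : ℕ) = (π' i : ℕ))
    {s : List ℕ} (hs : s = [1, 3, 2] ∨ s = [2, 1, 3] ∨ s = [2, 3, 4, 1]) :
    AvoidsPat π s ↔ AvoidsPat π' s := by
  have hback : ∀ j : Fin (n + k), k ≤ (j : ℕ) → (π j : ℕ) < n := by
    intro j hj
    by_contra hge
    push_neg at hge
    have hlt := (π j).isLt
    have heq : π ⟨(π j : ℕ) - n, by omega⟩ = π j := by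
      apply Fin.ext
      rw [hfront ⟨(π j : ℕ) - n, by omega⟩ (by simp; omega)]
      simp
      omega
    have h2 := congrArg Fin.val (π.injective heq)
    simp at h2
    omega
  constructor
  · -- Av π → Av π'
    intro hπ hex
    obtain ⟨f', hf'⟩ := hex
    apply hπ
    refine ⟨OrderEmbedding.ofStrictMono
      (fun i => (⟨k + (f' i : ℕ), by have := (f' i).isLt; omega⟩ : Fin (n + k))) ?_, ?_⟩
    · intro i j hij
      have := f'.strictMono hij
      rw [Fin.lt_def] at this ⊢
      simp only []
      omega
    · intro i j
      rw [hf' i j]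
      show _ ↔ π ⟨k + (f' i : ℕ), _⟩ < π ⟨k + (f' j : ℕ), _⟩
      rw [Fin.lt_def, Fin.lt_def]
      rw [← hval (f' i), ← hval (f' j)]
  · -- Av π' → Av π
    intro hπ' hex
    obtain ⟨f, hf⟩ := hex
    apply hπ'
    rcases hs with rfl | rfl | rfl
    · refine shrink_occ π π' hval f hf ?_
      intro i
      have hmono : f ⟨0, by decide⟩ ≤ f i := f.monotone (by rw [Fin.le_def]; simp)
      rw [Fin.le_def] at hmono
      suffices h0 : k ≤ ((f ⟨0, by decide⟩ : Fin (n+k)) : ℕ) by omega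
      by_contra hlt
      push_neg at hlt
      have hv0 : (π (f ⟨0, by decide⟩) : ℕ) = n + ((f ⟨0, by decide⟩ : Fin (n+k)) : ℕ) :=
        hfront _ hlt
      have e1 : π (f ⟨0, by decide⟩) < π (f ⟨1, by decide⟩) :=
        (hf ⟨0, by decide⟩ ⟨1, by decide⟩).mp (by decide)
      have e2 : π (f ⟨0, by decide⟩) < π (f ⟨2, by decide⟩) :=
        (hf ⟨0, by decide⟩ ⟨2, by decide⟩).mp (by decide)
      rw [Fin.lt_def] at e1 e2
      have k1 : ((f ⟨1, by decide⟩ : Fin (n+k)) : ℕ) < k := by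
        by_contra hk1; push_neg at hk1; have := hback _ hk1; omega
      have k2 : ((f ⟨2, by decide⟩ : Fin (n+k)) : ℕ) < k := by
        by_contra hk2; push_neg at hk2; have := hback _ hk2; omega
      have m1 : f ⟨0, by decide⟩ < f ⟨1, by decide⟩ := f.strictMono (by decide)
      have m2 : f ⟨1, by decide⟩ < f ⟨2, by decide⟩ := f.strictMono (by decide)
      rw [Fin.lt_def] at m1 m2
      omega
    · refine shrink_occ π π' hval f hf ?_
      intro i
      have hmono : f ⟨0, by decide⟩ ≤ f i := f.monotone (by rw [Fin.le_def]; simp)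
      rw [Fin.le_def] at hmono
      suffices h0 : k ≤ ((f ⟨0, by decide⟩ : Fin (n+k)) : ℕ) by omega
      by_contra hlt
      push_neg at hlt
      have hv0 : (π (f ⟨0, by decide⟩) : ℕ) = n + ((f ⟨0, by decide⟩ : Fin (n+k)) : ℕ) :=
        hfront _ hlt
      have e2 : π (f ⟨0, by decide⟩) < π (f ⟨2, by decide⟩) :=
        (hf ⟨0, by decide⟩ ⟨2, by decide⟩).mp (by decide)
      rw [Fin.lt_def] at e2
      have k2 : ((f ⟨2, by decide⟩ : Fin (n+k)) : ℕ) < k := by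
        by_contra hk2; push_neg at hk2; have := hback _ hk2; omega
      have m1 : f ⟨0, by decide⟩ < f ⟨1, by decide⟩ := f.strictMono (by decide)
      have m2 : f ⟨1, by decide⟩ < f ⟨2, by decide⟩ := f.strictMono (by decide)
      rw [Fin.lt_def] at m1 m2
      omega
    · refine shrink_occ π π' hval f hf ?_
      intro i
      have hmono : f ⟨0, by decide⟩ ≤ f i := f.monotone (by rw [Fin.le_def]; simp)
      rw [Fin.le_def] at hmono
      suffices h0 : k ≤ ((f ⟨0, by decide⟩ : Fin (n+k)) : ℕ) by omega
      by_contra hlt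
      push_neg at hlt
      have hv0 : (π (f ⟨0, by decide⟩) : ℕ) = n + ((f ⟨0, by decide⟩ : Fin (n+k)) : ℕ) :=
        hfront _ hlt
      have e1 : π (f ⟨0, by decide⟩) < π (f ⟨1, by decide⟩) :=
        (hf ⟨0, by decide⟩ ⟨1, by decide⟩).mp (by decide)
      have e2 : π (f ⟨0, by decide⟩) < π (f ⟨2, by decide⟩) :=
        (hf ⟨0, by decide⟩ ⟨2, by decide⟩).mp (by decide)
      rw [Fin.lt_def] at e1 e2
      have k1 : ((f ⟨1, by decide⟩ : Fin (n+k)) : ℕ) < k := by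
        by_contra hk1; push_neg at hk1; have := hback _ hk1; omega
      have k2 : ((f ⟨2, by decide⟩ : Fin (n+k)) : ℕ) < k := by
        by_contra hk2; push_neg at hk2; have := hback _ hk2; omega
      have m1 : f ⟨0, by decide⟩ < f ⟨1, by decide⟩ := f.strictMono (by decide)
      have m2 : f ⟨1, by decide⟩ < f ⟨2, by decide⟩ := f.strictMono (by decide)
      rw [Fin.lt_def] at m1 m2
      omega

end Transfer

/-! ### Extension permutations -/

section Ext

variable {n : ℕ}

/-- Prepend the maximum value at the front of a permutation. -/
noncomputable def ext1 (π' : Equiv.Perm (Fin n)) : Equiv.Perm (Fin (n + 1)) :=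
  Equiv.ofBijective
    (fun x : Fin (n + 1) =>
      if h0 : (x : ℕ) = 0 then ⟨n, by omega⟩
      else ⟨(π' ⟨(x : ℕ) - 1, by have := x.isLt; omega⟩ : ℕ),
        by have := (π' ⟨(x : ℕ) - 1, by have := x.isLt; omega⟩).isLt; omega⟩)
    (Finite.injective_iff_bijective.mp (by
      intro x y h
      simp only [] at h
      split_ifs at h with hx hy hy
      · exact Fin.ext (by omega)
      · have := congrArg Fin.val h
        simp only [] at this
        have := (π' ⟨(y : ℕ) - 1, by have := y.isLt; omega⟩).isLt
        omega
      · have := congrArg Fin.val h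
        simp only [] at this
        have := (π' ⟨(x : ℕ) - 1, by have := x.isLt; omega⟩).isLt
        omega
      · have hv := congrArg Fin.val h
        simp only [] at hv
        have := π'.injective (Fin.ext hv)
        have := congrArg Fin.val this
        simp only [] at this
        exact Fin.ext (by omega)))

lemma ext1_val_zero (π' : Equiv.Perm (Fin n)) (x : Fin (n + 1)) (hx : (x : ℕ) = 0) :
    (ext1 π' x : ℕ) = n := by
  have hx' : x = 0 := Fin.ext hx
  simp [ext1, Equiv.ofBijective, hx, hx']

lemma ext1_val_pos (π' : Equiv.Perm (Fin n)) (x : Fin (n + 1)) (hx : (x : ℕ) ≠ 0) :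
    (ext1 π' x : ℕ) = (π' ⟨(x : ℕ) - 1, by have := x.isLt; omega⟩ : ℕ) := by
  have hx' : x ≠ 0 := fun h => hx (by simp [h])
  simp [ext1, Equiv.ofBijective, hx, hx']

/-- Prepend the two largest values (in order `n`, `n+1`) at the front. -/
noncomputable def ext2 (π'' : Equiv.Perm (Fin n)) : Equiv.Perm (Fin (n + 2)) :=
  Equiv.ofBijective
    (fun x : Fin (n + 2) =>
      if h0 : (x : ℕ) = 0 then ⟨n, by omega⟩
      else if h1 : (x : ℕ) = 1 then ⟨n + 1, by omega⟩
      else ⟨(π'' ⟨(x : ℕ) - 2, by have := x.isLt; omega⟩ : ℕ),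
        by have := (π'' ⟨(x : ℕ) - 2, by have := x.isLt; omega⟩).isLt; omega⟩)
    (Finite.injective_iff_bijective.mp (by
      intro x y h
      simp only [] at h
      have hv := congrArg Fin.val h
      split_ifs at hv with a1 a2 a3 a4 a5 a6 a7 a8 <;>
        simp only [] at hv
      · exact Fin.ext (by omega)
      · omega
      · have := (π'' ⟨(y : ℕ) - 2, by have := y.isLt; omega⟩).isLt; omega
      · omega
      · exact Fin.ext (by omega)
      · have := (π'' ⟨(y : ℕ) - 2, by have := y.isLt; omega⟩).isLt; omega
      · have := (π'' ⟨(x : ℕ) - 2, by have := x.isLt; omega⟩).isLt; omega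
      · have := (π'' ⟨(x : ℕ) - 2, by have := x.isLt; omega⟩).isLt; omega
      · have := π''.injective (Fin.ext hv)
        have := congrArg Fin.val this
        simp only [] at this
        exact Fin.ext (by omega)))

lemma ext2_val_zero (π'' : Equiv.Perm (Fin n)) (x : Fin (n + 2)) (hx : (x : ℕ) = 0) :
    (ext2 π'' x : ℕ) = n := by
  have hx' : x = 0 := Fin.ext hx
  simp [ext2, Equiv.ofBijective, hx, hx']

lemma ext2_val_one (π'' : Equiv.Perm (Fin n)) (x : Fin (n + 2)) (hx : (x : ℕ) = 1) :
    (ext2 π'' x : ℕ) = n + 1 := by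
  have hx' : x ≠ 0 := fun h => by simp [h] at hx
  simp [ext2, Equiv.ofBijective, hx, hx']

lemma ext2_val_rest (π'' : Equiv.Perm (Fin n)) (x : Fin (n + 2))
    (hx0 : (x : ℕ) ≠ 0) (hx1 : (x : ℕ) ≠ 1) :
    (ext2 π'' x : ℕ) = (π'' ⟨(x : ℕ) - 2, by have := x.isLt; omega⟩ : ℕ) := by
  have hx' : x ≠ 0 := fun h => hx0 (by simp [h])
  simp [ext2, Equiv.ofBijective, hx0, hx1, hx']

lemma avoids_ext1_pat (π' : Equiv.Perm (Fin n)) {s : List ℕ}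
    (hs : s = [1, 3, 2] ∨ s = [2, 1, 3] ∨ s = [2, 3, 4, 1]) :
    AvoidsPat (ext1 π') s ↔ AvoidsPat π' s := by
  refine avoids_transfer (n := n) (k := 1) (ext1 π') π' (by omega) ?_ ?_ hs
  · intro j hj
    have hj0 : (j : ℕ) = 0 := by omega
    rw [ext1_val_zero _ _ hj0, hj0]
    omega
  · intro i
    rw [ext1_val_pos _ _ (by simp)]
    have hx : (⟨1 + (i : ℕ) - 1, by have := i.isLt; omega⟩ : Fin n) = i :=
      Fin.ext (by simp)
    simp only []
    rw [hx]

lemma avoids_ext1_iff (π' : Equiv.Perm (Fin n)) : Avoids (ext1 π') ↔ Avoids π' := by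
  unfold Avoids
  rw [avoids_ext1_pat π' (Or.inl rfl), avoids_ext1_pat π' (Or.inr (Or.inl rfl)),
    avoids_ext1_pat π' (Or.inr (Or.inr rfl))]

lemma avoids_ext2_pat (π'' : Equiv.Perm (Fin n)) {s : List ℕ}
    (hs : s = [1, 3, 2] ∨ s = [2, 1, 3] ∨ s = [2, 3, 4, 1]) :
    AvoidsPat (ext2 π'') s ↔ AvoidsPat π'' s := by
  refine avoids_transfer (n := n) (k := 2) (ext2 π'') π'' (by omega) ?_ ?_ hs
  · intro j hj
    rcases (by omega : (j : ℕ) = 0 ∨ (j : ℕ) = 1) with hj0 | hj1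
    · rw [ext2_val_zero _ _ hj0, hj0]
      omega
    · rw [ext2_val_one _ _ hj1, hj1]
  · intro i
    rw [ext2_val_rest _ _ (by simp) (by simp; omega)]
    have hx : (⟨2 + (i : ℕ) - 2, by have := i.isLt; omega⟩ : Fin n) = i :=
      Fin.ext (by simp)
    simp only []
    rw [hx]

lemma avoids_ext2_iff (π'' : Equiv.Perm (Fin n)) : Avoids (ext2 π'') ↔ Avoids π'' := by
  unfold Avoids
  rw [avoids_ext2_pat π'' (Or.inl rfl), avoids_ext2_pat π'' (Or.inr (Or.inl rfl)),
    avoids_ext2_pat π'' (Or.inr (Or.inr rfl))]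

lemma ext1_injective : Function.Injective (ext1 (n := n)) := by
  intro a b h
  apply Equiv.ext
  intro i
  apply Fin.ext
  have hv := congrArg
    (fun σ : Equiv.Perm (Fin (n + 1)) => (σ ⟨(i : ℕ) + 1, by have := i.isLt; omega⟩ : ℕ)) h
  rw [ext1_val_pos _ _ (by simp), ext1_val_pos _ _ (by simp)] at hv
  simpa using hv

lemma ext2_injective : Function.Injective (ext2 (n := n)) := by
  intro a b h
  apply Equiv.ext
  intro i
  apply Fin.ext
  have hv := congrArg
    (fun σ : Equiv.Perm (Fin (n + 2)) => (σ ⟨(i : ℕ) + 2, by have := i.isLt; omega⟩ : ℕ)) h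
  rw [ext2_val_rest _ _ (by simp) (by simp), ext2_val_rest _ _ (by simp) (by simp)] at hv
  simpa using hv

end Ext

/-! ### Structure of avoiding permutations -/

/-- If the first value is the second largest, the second value is the largest. -/
lemma second_max {n : ℕ} (π : Equiv.Perm (Fin (n + 2)))
    (h213 : AvoidsPat π [2, 1, 3]) (h0 : (π 0 : ℕ) = n) : (π 1 : ℕ) = n + 1 := by
  by_contra hne
  set p := π.symm (Fin.last (n + 1)) with hpdef
  have hp : π p = Fin.last (n + 1) := Equiv.apply_symm_apply _ _
  have hpv : (π p : ℕ) = n + 1 := by rw [hp]; rfl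
  have hp0 : (p : ℕ) ≠ 0 := by
    intro h
    have : p = 0 := Fin.ext h
    rw [this] at hpv
    omega
  have hp1 : (p : ℕ) ≠ 1 := by
    intro h
    have : p = 1 := Fin.ext (by rw [h]; rfl)
    rw [this] at hpv
    exact hne hpv
  have h1v : (π 1 : ℕ) < n := by
    have h1n : (π 1 : ℕ) ≠ n := by
      intro h
      have : π 1 = π 0 := Fin.ext (by rw [h, h0])
      have := π.injective this
      exact absurd (congrArg Fin.val this) (by simp)
    have h1top : (π 1 : ℕ) ≠ n + 1 := hne
    have := (π 1).isLt
    omega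
  exact not_avoid_213 π (a := 0) (b := 1) (c := p)
    (by rw [Fin.lt_def]; simp)
    (by rw [Fin.lt_def]; simp; omega)
    (by rw [Fin.lt_def]; omega)
    (by rw [Fin.lt_def]; omega) h213

/-- If the first value is at most `n - 3`, the permutation is the identity. -/
lemma eq_one_of_small {m : ℕ} (π : Equiv.Perm (Fin (m + 3)))
    (hAv : Avoids π) (h : (π 0 : ℕ) ≤ m) : π = 1 := by
  have hzero : (π 0 : ℕ) = 0 := by
    by_contra hv0
    have hv1 : 1 ≤ (π 0 : ℕ) := by omega
    set v := (π 0 : ℕ) with hvdef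
    set p1 := π.symm ⟨v + 1, by omega⟩ with hp1def
    set p2 := π.symm ⟨v + 2, by omega⟩ with hp2def
    set r := π.symm ⟨0, by omega⟩ with hrdef
    have hvp1 : (π p1 : ℕ) = v + 1 := by rw [hp1def, Equiv.apply_symm_apply]
    have hvp2 : (π p2 : ℕ) = v + 2 := by rw [hp2def, Equiv.apply_symm_apply]
    have hvr : (π r : ℕ) = 0 := by rw [hrdef, Equiv.apply_symm_apply]
    have hp1pos : 0 < (p1 : ℕ) := by
      rcases Nat.eq_zero_or_pos (p1 : ℕ) with h' | h'
      · have : p1 = 0 := Fin.ext h'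
        rw [this] at hvp1
        omega
      · exact h'
    have hp2pos : 0 < (p2 : ℕ) := by
      rcases Nat.eq_zero_or_pos (p2 : ℕ) with h' | h'
      · have : p2 = 0 := Fin.ext h'
        rw [this] at hvp2
        omega
      · exact h'
    have hrpos : 0 < (r : ℕ) := by
      rcases Nat.eq_zero_or_pos (r : ℕ) with h' | h'
      · have : r = 0 := Fin.ext h'
        rw [this] at hvr
        omega
      · exact h'
    have hp12 : (p1 : ℕ) < (p2 : ℕ) := by
      rcases lt_trichotomy (p1 : ℕ) (p2 : ℕ) with h' | h' | h'
      · exact h'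
      · exfalso; have : p1 = p2 := Fin.ext h'
        rw [this] at hvp1; omega
      · exfalso
        exact not_avoid_132 π (a := 0) (b := p2) (c := p1)
          (by rw [Fin.lt_def]; simpa using hp2pos)
          (by rw [Fin.lt_def]; omega)
          (by rw [Fin.lt_def]; omega)
          (by rw [Fin.lt_def]; omega) hAv.1
    have hrp2 : (r : ℕ) ≠ (p2 : ℕ) := by
      intro h'
      have : r = p2 := Fin.ext h'
      rw [this] at hvr; omega
    rcases lt_or_gt_of_ne hrp2 with h' | h'
    · exact not_avoid_213 π (a := 0) (b := r) (c := p2)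
        (by rw [Fin.lt_def]; simpa using hrpos)
        (by rw [Fin.lt_def]; omega)
        (by rw [Fin.lt_def]; omega)
        (by rw [Fin.lt_def]; omega) hAv.2.1
    · exact not_avoid_2341 π (a := 0) (b := p1) (c := p2) (d := r)
        (by rw [Fin.lt_def]; simpa using hp1pos)
        (by rw [Fin.lt_def]; omega)
        (by rw [Fin.lt_def]; omega)
        (by rw [Fin.lt_def]; omega)
        (by rw [Fin.lt_def]; omega)
        (by rw [Fin.lt_def]; omega) hAv.2.2
  -- now show strict monotonicity
  have hsm : StrictMono ⇑π := by
    intro i j hij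
    by_contra hc
    push_neg at hc
    have hne : π j ≠ π i := by
      intro h'
      exact absurd (π.injective h') (ne_of_gt hij)
    have hlt : π j < π i := lt_of_le_of_ne hc hne
    have hi0 : 0 < (i : ℕ) := by
      rcases Nat.eq_zero_or_pos (i : ℕ) with h' | h'
      · exfalso
        have : i = 0 := Fin.ext h'
        rw [Fin.lt_def] at hlt
        rw [this] at hlt
        omega
      · exact h'
    have hj0 : 0 < (π j : ℕ) := by
      rcases Nat.eq_zero_or_pos ((π j : ℕ)) with h' | h'
      · exfalso
        have : π j = π 0 := Fin.ext (by rw [h', hzero])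
        have := π.injective this
        have hj0' := congrArg Fin.val this
        rw [Fin.lt_def] at hij
        simp at hj0'
        have h00 : ((0 : Fin (m + 3)) : ℕ) = 0 := by simp
        omega
      · exact h'
    exact not_avoid_132 π (a := 0) (b := i) (c := j)
      (by rw [Fin.lt_def]; simpa using hi0)
      hij
      (by rw [Fin.lt_def]; omega)
      hlt hAv.1
  -- strictly monotone permutation is the identity
  have hsm' : StrictMono ⇑π.symm := by
    intro a b hab
    rcases lt_trichotomy (π.symm a) (π.symm b) with h' | h' | h'
    · exact h'
    · exfalso
      have : a = b := by
        have := congrArg π h'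
        simpa using this
      exact absurd this (ne_of_lt hab)
    · exfalso
      have := hsm h'
      simp only [Equiv.apply_symm_apply] at this
      exact absurd hab (not_lt_of_gt this)
  haveI : WellFoundedLT (Fin (m + 3)) := Finite.to_wellFoundedLT
  apply Equiv.ext
  intro x
  have h1 : x ≤ π x := hsm.le_apply
  have h2 : π x ≤ π.symm (π x) := hsm'.le_apply
  rw [Equiv.symm_apply_apply] at h2
  simp only [Equiv.Perm.one_apply]
  exact le_antisymm h2 h1

/-! ### The permutation-side recursion -/

noncomputable def permSum (k : ℕ) : (Unit ⊕ AvT (k + 2) ⊕ AvT (k + 1)) → AvT (k + 3) :=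
  fun x =>
    match x with
    | Sum.inl _ => ⟨1, one_avoids _⟩
    | Sum.inr (Sum.inl π') => ⟨ext1 π'.1, (avoids_ext1_iff π'.1).mpr π'.2⟩
    | Sum.inr (Sum.inr π'') => ⟨ext2 π''.1, (avoids_ext2_iff π''.1).mpr π''.2⟩

lemma permSum_bijective (k : ℕ) : Function.Bijective (permSum k) := by
  constructor
  · intro x y hxy
    have hval := congrArg (fun σ : AvT (k + 3) => (σ.1 0 : ℕ)) hxy
    rcases x with _ | ⟨πx, hxA⟩ | ⟨πx, hxA⟩ <;> rcases y with _ | ⟨πy, hyA⟩ | ⟨πy, hyA⟩ <;>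
      simp only [permSum, Subtype.mk.injEq] at hval hxy
    · rfl
    · exfalso
      rw [ext1_val_zero _ _ rfl] at hval
      simp at hval
    · exfalso
      rw [ext2_val_zero _ _ rfl] at hval
      simp at hval
    · exfalso
      rw [ext1_val_zero _ _ rfl] at hval
      simp at hval
    · have h' : πx = πy := ext1_injective hxy
      subst h'
      rfl
    · exfalso
      rw [ext1_val_zero _ _ rfl, ext2_val_zero _ _ rfl] at hval
      omega
    · exfalso
      rw [ext2_val_zero _ _ rfl] at hval
      simp at hval
    · exfalso
      rw [ext1_val_zero _ _ rfl, ext2_val_zero _ _ rfl] at hval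
      omega
    · have h' : πx = πy := ext2_injective hxy
      subst h'
      rfl
  · rintro ⟨π, hAv⟩
    have hlt := (π 0).isLt
    rcases Nat.lt_or_ge (π 0 : ℕ) (k + 1) with hsmall | hge
    · -- identity case
      refine ⟨Sum.inl (), Subtype.ext ?_⟩
      exact (eq_one_of_small π hAv (by omega)).symm
    rcases Nat.eq_or_lt_of_le hge with hk1 | hk2
    · -- π 0 = k + 1 : use ext2
      have h1 : (π 1 : ℕ) = k + 2 := second_max (n := k + 1) π hAv.2.1 hk1.symm
      have hrest : ∀ i : Fin (k + 1), (π ⟨(i : ℕ) + 2, by have := i.isLt; omega⟩ : ℕ) < k + 1 := by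
        intro i
        set x : Fin (k + 3) := ⟨(i : ℕ) + 2, by have := i.isLt; omega⟩ with hxdef
        have hx0 : x ≠ 0 := by
          intro h'; have := congrArg Fin.val h'; simp [hxdef] at this
        have hx1 : x ≠ 1 := by
          intro h'; have := congrArg Fin.val h'; simp [hxdef] at this
        have hne0 : π x ≠ π 0 := fun h' => hx0 (π.injective h')
        have hne1 : π x ≠ π 1 := fun h' => hx1 (π.injective h')
        have hv0 : (π x : ℕ) ≠ k + 1 := by
          intro h'
          exact hne0 (Fin.ext (by rw [h', ← hk1]))
        have hv1 : (π x : ℕ) ≠ k + 2 := by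
          intro h'
          exact hne1 (Fin.ext (by rw [h', h1]))
        have := (π x).isLt
        omega
      set π'' : Equiv.Perm (Fin (k + 1)) := Equiv.ofBijective
        (fun i => (⟨(π ⟨(i : ℕ) + 2, by have := i.isLt; omega⟩ : ℕ), hrest i⟩ : Fin (k + 1)))
        (Finite.injective_iff_bijective.mp (by
          intro a b hab
          have hv := congrArg Fin.val hab
          simp only [] at hv
          have := π.injective (Fin.ext hv)
          have := congrArg Fin.val this
          simp only [] at this
          exact Fin.ext (by omega))) with hπdef
      have hext : ext2 π'' = π := by
        apply Equiv.ext
        intro x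
        apply Fin.ext
        rcases Nat.eq_zero_or_pos (x : ℕ) with hx0 | hx0
        · rw [ext2_val_zero _ _ hx0]
          have : x = 0 := Fin.ext hx0
          rw [this, ← hk1]
        rcases Nat.eq_or_lt_of_le hx0 with hx1 | hx2
        · rw [ext2_val_one _ _ hx1.symm]
          have : x = 1 := Fin.ext (by rw [← hx1]; rfl)
          rw [this, h1]
        · rw [ext2_val_rest _ _ (by omega) (by omega)]
          rw [hπdef]
          simp only [Equiv.ofBijective_apply]
          have hxx : (⟨((⟨(x : ℕ) - 2, by have := x.isLt; omega⟩ : Fin (k + 1)) : ℕ) + 2,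
              by have := x.isLt; omega⟩ : Fin (k + 3)) = x := Fin.ext (by simp; omega)
          rw [hxx]
      refine ⟨Sum.inr (Sum.inr ⟨π'', ?_⟩), Subtype.ext hext⟩
      exact (avoids_ext2_iff π'').mp (by rw [hext]; exact hAv)
    · -- π 0 = k + 2 : use ext1
      have hk2' : (π 0 : ℕ) = k + 2 := by omega
      have hrest : ∀ i : Fin (k + 2), (π ⟨(i : ℕ) + 1, by have := i.isLt; omega⟩ : ℕ) < k + 2 := by
        intro i
        set x : Fin (k + 3) := ⟨(i : ℕ) + 1, by have := i.isLt; omega⟩ with hxdef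
        have hx0 : x ≠ 0 := by
          intro h'; have := congrArg Fin.val h'; simp [hxdef] at this
        have hne0 : π x ≠ π 0 := fun h' => hx0 (π.injective h')
        have hv0 : (π x : ℕ) ≠ k + 2 := by
          intro h'
          exact hne0 (Fin.ext (by rw [h', hk2']))
        have := (π x).isLt
        omega
      set π' : Equiv.Perm (Fin (k + 2)) := Equiv.ofBijective
        (fun i => (⟨(π ⟨(i : ℕ) + 1, by have := i.isLt; omega⟩ : ℕ), hrest i⟩ : Fin (k + 2)))
        (Finite.injective_iff_bijective.mp (by
          intro a b hab
          have hv := congrArg Fin.val hab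
          simp only [] at hv
          have := π.injective (Fin.ext hv)
          have := congrArg Fin.val this
          simp only [] at this
          exact Fin.ext (by omega))) with hπdef
      have hext : ext1 π' = π := by
        apply Equiv.ext
        intro x
        apply Fin.ext
        rcases Nat.eq_zero_or_pos (x : ℕ) with hx0 | hx0
        · rw [ext1_val_zero _ _ hx0]
          have : x = 0 := Fin.ext hx0
          rw [this, hk2']
        · rw [ext1_val_pos _ _ (by omega)]
          rw [hπdef]
          simp only [Equiv.ofBijective_apply]
          have hxx : (⟨((⟨(x : ℕ) - 1, by have := x.isLt; omega⟩ : Fin (k + 2)) : ℕ) + 1,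
              by have := x.isLt; omega⟩ : Fin (k + 3)) = x := Fin.ext (by simp; omega)
          rw [hxx]
      refine ⟨Sum.inr (Sum.inl ⟨π', ?_⟩), Subtype.ext hext⟩
      exact (avoids_ext1_iff π').mp (by rw [hext]; exact hAv)

/-! ### The tiling-side recursion -/

lemma sum_ones (l : List ℕ) (h : ∀ x ∈ l, x = 1) : l.sum = l.length := by
  induction l with
  | nil => rfl
  | cons a t ih =>
    rw [List.sum_cons, List.length_cons, h a (List.mem_cons_self),
      ih (fun x hx => h x (List.mem_cons_of_mem a hx))]
    omega

lemma nil_of_sum_zero (l : List ℕ) (hp : ∀ x ∈ l, x = 1 ∨ x = 2) (hs : l.sum = 0) :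
    l = [] := by
  cases l with
  | nil => rfl
  | cons a t =>
    exfalso
    rw [List.sum_cons] at hs
    rcases hp a (List.mem_cons_self) with rfl | rfl <;> omega

lemma comp_one (l : List ℕ) (hs : l.sum = 1) (hp : ∀ x ∈ l, x = 1 ∨ x = 2) :
    l = [1] := by
  cases l with
  | nil => simp at hs
  | cons a t =>
    rw [List.sum_cons] at hs
    rcases hp a (List.mem_cons_self) with rfl | rfl
    · have : t = [] := nil_of_sum_zero t (fun x hx => hp x (List.mem_cons_of_mem _ hx)) (by omega)
      rw [this]
    · omega

lemma til_two (l : List ℕ) (hs : l.sum = 2) (hp : ∀ x ∈ l, x = 1 ∨ x = 2) (hm : 2 ∈ l) :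
    l = [2] := by
  cases l with
  | nil => simp at hs
  | cons a t =>
    rw [List.sum_cons] at hs
    rcases hp a (List.mem_cons_self) with rfl | rfl
    · exfalso
      have hmt : 2 ∈ t := by
        rcases List.mem_cons.mp hm with h' | h'
        · omega
        · exact h'
      have := List.single_le_sum (fun x _ => Nat.zero_le x) 2 hmt
      omega
    · have : t = [] := nil_of_sum_zero t (fun x hx => hp x (List.mem_cons_of_mem _ hx)) (by omega)
      rw [this]

lemma til_three (l : List ℕ) (hs : l.sum = 3) (hp : ∀ x ∈ l, x = 1 ∨ x = 2) (hm : 2 ∈ l) :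
    l = [1, 2] ∨ l = [2, 1] := by
  cases l with
  | nil => simp at hs
  | cons a t =>
    rw [List.sum_cons] at hs
    rcases hp a (List.mem_cons_self) with rfl | rfl
    · left
      have hmt : 2 ∈ t := by
        rcases List.mem_cons.mp hm with h' | h'
        · omega
        · exact h'
      have := til_two t (by omega) (fun x hx => hp x (List.mem_cons_of_mem _ hx)) hmt
      rw [this]
    · right
      have := comp_one t (by omega) (fun x hx => hp x (List.mem_cons_of_mem _ hx))
      rw [this]

noncomputable def tilF (m : ℕ) : (TilT (m + 1) ⊕ CompT m) → TilT (m + 2) :=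
  fun x =>
    match x with
    | Sum.inl l => ⟨1 :: l.1, by
        refine ⟨by rw [List.sum_cons, l.2.1]; omega, ?_, List.mem_cons_of_mem _ l.2.2.2⟩
        intro x hx
        rcases List.mem_cons.mp hx with rfl | hx'
        · left; rfl
        · exact l.2.2.1 x hx'⟩
    | Sum.inr l => ⟨2 :: l.1, by
        refine ⟨by rw [List.sum_cons, l.2.1]; omega, ?_, List.mem_cons_self⟩
        intro x hx
        rcases List.mem_cons.mp hx with rfl | hx'
        · right; rfl
        · exact l.2.2 x hx'⟩

lemma tilF_bijective (m : ℕ) : Function.Bijective (tilF m) := by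
  constructor
  · intro x y hxy
    rcases x with x | x <;> rcases y with y | y <;>
      simp only [tilF, Subtype.mk.injEq, List.cons.injEq] at hxy
    · exact congrArg Sum.inl (Subtype.ext hxy.2)
    · omega
    · omega
    · exact congrArg Sum.inr (Subtype.ext hxy.2)
  · rintro ⟨l, hs, hp, hm⟩
    cases l with
    | nil => simp at hs
    | cons a t =>
      rw [List.sum_cons] at hs
      rcases hp a (List.mem_cons_self) with rfl | rfl
      · have hmt : 2 ∈ t := by
          rcases List.mem_cons.mp hm with h' | h'
          · omega
          · exact h'
        exact ⟨Sum.inl ⟨t, by omega, fun x hx => hp x (List.mem_cons_of_mem _ hx), hmt⟩, rfl⟩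
      · exact ⟨Sum.inr ⟨t, by omega, fun x hx => hp x (List.mem_cons_of_mem _ hx)⟩, rfl⟩

noncomputable def compF (m : ℕ) : (TilT m ⊕ Unit) → CompT m :=
  fun x =>
    match x with
    | Sum.inl l => ⟨l.1, l.2.1, l.2.2.1⟩
    | Sum.inr _ => ⟨List.replicate m 1, by
        refine ⟨by simp, ?_⟩
        intro x hx
        left
        exact List.eq_of_mem_replicate hx⟩

lemma compF_bijective (m : ℕ) : Function.Bijective (compF m) := by
  constructor
  · intro x y hxy
    rcases x with x | x <;> rcases y with y | y <;>
      simp only [compF, Subtype.mk.injEq] at hxy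
    · exact congrArg Sum.inl (Subtype.ext hxy)
    · exfalso
      have := x.2.2.2
      rw [hxy] at this
      have := List.eq_of_mem_replicate this
      omega
    · exfalso
      have := y.2.2.2
      rw [← hxy] at this
      have := List.eq_of_mem_replicate this
      omega
    · rfl
  · rintro ⟨l, hs, hp⟩
    by_cases hm : 2 ∈ l
    · exact ⟨Sum.inl ⟨l, hs, hp, hm⟩, rfl⟩
    · refine ⟨Sum.inr (), Subtype.ext ?_⟩
      have hall : ∀ x ∈ l, x = 1 := by
        intro x hx
        rcases hp x hx with h' | h'
        · exact h'
        · exact absurd (h' ▸ hx) hm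
      have hlen : l.length = m := by
        rw [← hs, sum_ones l hall]
      simp only [compF]
      symm
      rw [List.eq_replicate_iff]
      exact ⟨hlen, hall⟩

/-! ### Base cases -/

noncomputable def base1 : AvT 1 ≃ TilT 2 where
  toFun := fun _ => ⟨[2], by norm_num⟩
  invFun := fun _ => ⟨1, one_avoids 1⟩
  left_inv := by
    rintro ⟨π, h⟩
    apply Subtype.ext
    apply Equiv.ext
    intro x
    apply Subsingleton.elim
  right_inv := by
    rintro ⟨l, hs, hp, hm⟩
    exact Subtype.ext (til_two l hs hp hm).symm

lemma perm_fin_two (π : Equiv.Perm (Fin 2)) : π = 1 ∨ π = Equiv.swap 0 1 := by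
  have h0 := (π 0).isLt
  have h1 := (π 1).isLt
  have hne' : (π 0 : ℕ) ≠ (π 1 : ℕ) := fun h => absurd (π.injective (Fin.ext h)) (by decide)
  rcases Nat.eq_zero_or_pos (π 0 : ℕ) with hz | hz
  · left
    apply Equiv.ext
    intro x
    rcases (by omega : (x : ℕ) = 0 ∨ (x : ℕ) = 1) with hx | hx
    · have hx' : x = 0 := Fin.ext hx
      rw [hx']
      exact Fin.ext (by simpa using hz)
    · have hx' : x = 1 := Fin.ext hx
      rw [hx']
      exact Fin.ext (by simp; omega)
  · right
    apply Equiv.ext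
    intro x
    rcases (by omega : (x : ℕ) = 0 ∨ (x : ℕ) = 1) with hx | hx
    · have hx' : x = 0 := Fin.ext hx
      rw [hx', Equiv.swap_apply_left]
      exact Fin.ext (by simp; omega)
    · have hx' : x = 1 := Fin.ext hx
      rw [hx', Equiv.swap_apply_right]
      exact Fin.ext (by simp; omega)

noncomputable def base2 : AvT 2 ≃ TilT 3 where
  toFun := fun π => if π.1 0 = 0 then ⟨[1, 2], by norm_num⟩ else ⟨[2, 1], by norm_num⟩
  invFun := fun l =>
    if l.1 = [1, 2] then ⟨1, avoids_of_le_two (by omega) 1⟩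
    else ⟨Equiv.swap 0 1, avoids_of_le_two (by omega) _⟩
  left_inv := by
    rintro ⟨π, h⟩
    rcases perm_fin_two π with rfl | rfl <;>
      dsimp only <;>
      split_ifs <;>
        first
          | rfl
          | simp_all
  right_inv := by
    rintro ⟨l, hs, hp, hm⟩
    rcases til_three l hs hp hm with rfl | rfl <;>
      dsimp only <;>
      split_ifs <;>
        first
          | rfl
          | simp_all

/-! ### Assembly -/

noncomputable def bigEquiv (k : ℕ) (e1 : AvT (k + 2) ≃ TilT (k + 3))
    (e2 : AvT (k + 1) ≃ TilT (k + 2)) : AvT (k + 3) ≃ TilT (k + 4) :=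
  ((Equiv.ofBijective (permSum k) (permSum_bijective k)).symm.trans
    (Equiv.sumCongr (Equiv.refl Unit) (Equiv.sumCongr e1 e2))).trans
    (((Equiv.sumComm Unit (TilT (k + 3) ⊕ TilT (k + 2))).trans
      (Equiv.sumAssoc (TilT (k + 3)) (TilT (k + 2)) Unit)).trans
      ((Equiv.sumCongr (Equiv.refl (TilT (k + 3)))
        (Equiv.ofBijective (compF (k + 2)) (compF_bijective (k + 2)))).trans
        (Equiv.ofBijective (tilF (k + 2)) (tilF_bijective (k + 2)))))

theorem avoid_132_213_2341_equiv_tilings (n : ℕ) (hn : 1 ≤ n) :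
    Nonempty
      ({π : Equiv.Perm (Fin n) //
          AvoidsPat π [1, 3, 2] ∧ AvoidsPat π [2, 1, 3] ∧ AvoidsPat π [2, 3, 4, 1]} ≃
        {l : List ℕ // l.sum = n + 1 ∧ (∀ x ∈ l, x = 1 ∨ x = 2) ∧ 2 ∈ l}) := by
  have main : ∀ n : ℕ, 1 ≤ n → Nonempty (AvT n ≃ TilT (n + 1)) := by
    intro n
    induction n using Nat.strong_induction_on with
    | _ n ih =>
      intro hn
      rcases eq_or_ne n 1 with rfl | h1
      · exact ⟨base1⟩
      rcases eq_or_ne n 2 with rfl | h2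
      · exact ⟨base2⟩
      obtain ⟨k, rfl⟩ : ∃ k, n = k + 3 := ⟨n - 3, by omega⟩
      obtain ⟨e1⟩ := ih (k + 2) (by omega) (by omega)
      obtain ⟨e2⟩ := ih (k + 1) (by omega) (by omega)
      exact ⟨bigEquiv k e1 e2⟩
  exact main n hn
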